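/- arXiv:1609.00864 — 8 statements merged into one kernel-verified Lean document; each statement's English description precedes it below -/
import Mathlib

section
/- Let L ≥ 1 and let σ be a permutation of {1,…,L}. For k = 1, 2 let G_k be a real L×L matrix with zero diagonal entries such that (G_k)_{σ(i),σ(j)} = 0 whenever i ≥ j (i.e., both matrices become strictly upper triangular after conjugation by the same permutation), and let Λ₁, Λ₂ be L×L real diagonal matrices with strictly positive diagonal entries. Then I − G₁ and I − G₂ are invertible, and if (I−G₁)⁻¹ Λ₁ (I−G₁)⁻ᵀ = (I−G₂)⁻¹ Λ₂ (I−G₂)⁻ᵀ, then G₁ = G₂ and Λ₁ = Λ₂. -/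
open Matrix Finset

/-- Diagonal entry of a product of block-triangular matrices (injective index map). -/
lemma diag_mul_of_blockTriangular {L : ℕ} {b : Fin L → Fin L} (hb : Function.Injective b)
    {P Q : Matrix (Fin L) (Fin L) ℝ} (hP : P.BlockTriangular b) (hQ : Q.BlockTriangular b)
    (i : Fin L) : (P * Q) i i = P i i * Q i i := by
  rw [Matrix.mul_apply]
  refine Finset.sum_eq_single i (fun k _ hk => ?_) (by simp)
  rcases lt_trichotomy (b k) (b i) with h | h | h
  · rw [hP h, zero_mul]
  · exact absurd (hb h) hk
  · rw [hQ h, mul_zero]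

/-- Algebraic core of Proposition 2 (full-rank noise case): if a common permutation `σ`
renders `G₁` and `G₂` strictly upper triangular (no algebraic loops), and `Λ₁, Λ₂` are
diagonal positive matrices, then `I - G₁`, `I - G₂` are invertible and the spectrum value
`(I-G)⁻¹ Λ (I-G)⁻ᵀ` uniquely determines `G` and `Λ`. -/
theorem feedthrough_and_covariance_unique (L : ℕ) (hL : 1 ≤ L) (σ : Equiv.Perm (Fin L))
    (G₁ G₂ Λ₁ Λ₂ : Matrix (Fin L) (Fin L) ℝ)
    (hG₁d : ∀ i : Fin L, G₁ i i = 0)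
    (hG₂d : ∀ i : Fin L, G₂ i i = 0)
    (hG₁ : ∀ i j : Fin L, j ≤ i → G₁ (σ i) (σ j) = 0)
    (hG₂ : ∀ i j : Fin L, j ≤ i → G₂ (σ i) (σ j) = 0)
    (hΛ₁ : Λ₁.IsDiag) (hΛ₂ : Λ₂.IsDiag)
    (hΛ₁p : ∀ i : Fin L, 0 < Λ₁ i i)
    (hΛ₂p : ∀ i : Fin L, 0 < Λ₂ i i) :
    IsUnit (1 - G₁).det ∧ IsUnit (1 - G₂).det ∧
      ((1 - G₁)⁻¹ * Λ₁ * ((1 - G₁)⁻¹)ᵀ = (1 - G₂)⁻¹ * Λ₂ * ((1 - G₂)⁻¹)ᵀ →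
        G₁ = G₂ ∧ Λ₁ = Λ₂) := by
  set b : Fin L → Fin L := fun i => σ.symm i with hb_def
  have hb : Function.Injective b := σ.symm.injective
  -- entrywise triangularity of G's with respect to b
  have hGz : ∀ (G : Matrix (Fin L) (Fin L) ℝ),
      (∀ i j : Fin L, j ≤ i → G (σ i) (σ j) = 0) →
      ∀ i j : Fin L, b j ≤ b i → G i j = 0 := by
    intro G hG i j hij
    have := hG (σ.symm i) (σ.symm j) hij
    simpa using this
  have hU₁ : (1 - G₁).BlockTriangular b := by
    intro i j hij
    have hne : i ≠ j := fun h => (ne_of_lt hij) (congrArg b h.symm)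
    simp [Matrix.sub_apply, Matrix.one_apply_ne hne, hGz G₁ hG₁ i j hij.le]
  have hU₂ : (1 - G₂).BlockTriangular b := by
    intro i j hij
    have hne : i ≠ j := fun h => (ne_of_lt hij) (congrArg b h.symm)
    simp [Matrix.sub_apply, Matrix.one_apply_ne hne, hGz G₂ hG₂ i j hij.le]
  have hU₁diag : ∀ i, (1 - G₁) i i = 1 := by
    intro i; simp [Matrix.sub_apply, hG₁d i]
  have hU₂diag : ∀ i, (1 - G₂) i i = 1 := by
    intro i; simp [Matrix.sub_apply, hG₂d i]
  -- determinants via permutation to genuine upper-triangular form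
  have hdet : ∀ (G : Matrix (Fin L) (Fin L) ℝ), (∀ i j : Fin L, j ≤ i → G (σ i) (σ j) = 0) →
      (1 - G).det = 1 := by
    intro G hG
    have h1 : (1 - G).det = ((1 - G).submatrix σ σ).det :=
      (Matrix.det_submatrix_equiv_self σ (1 - G)).symm
    have h2 : ((1 - G).submatrix σ σ).BlockTriangular id := by
      intro i j hij
      have : (i : Fin L) ≠ j := fun h => absurd h (by intro h'; subst h'; exact lt_irrefl _ hij)
      simp [Matrix.submatrix_apply, Matrix.sub_apply, hG i j (le_of_lt hij),
        Matrix.one_apply_ne (σ.injective.ne this)]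
    rw [h1, Matrix.det_of_upperTriangular h2]
    apply Finset.prod_eq_one
    intro i _
    simp [Matrix.submatrix_apply, Matrix.sub_apply, hG i i le_rfl]
  have hd₁ : (1 - G₁).det = 1 := hdet G₁ hG₁
  have hd₂ : (1 - G₂).det = 1 := hdet G₂ hG₂
  have hu₁ : IsUnit (1 - G₁).det := by rw [hd₁]; exact isUnit_one
  have hu₂ : IsUnit (1 - G₂).det := by rw [hd₂]; exact isUnit_one
  refine ⟨hu₁, hu₂, ?_⟩
  intro E
  haveI : Invertible (1 - G₁) := (1 - G₁).invertibleOfIsUnitDet hu₁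
  haveI : Invertible (1 - G₂) := (1 - G₂).invertibleOfIsUnitDet hu₂
  have hU₁inv : ((1 - G₁)⁻¹).BlockTriangular b :=
    blockTriangular_inv_of_blockTriangular hU₁
  have hU₂inv : ((1 - G₂)⁻¹).BlockTriangular b :=
    blockTriangular_inv_of_blockTriangular hU₂
  have hU₁invdiag : ∀ i, (1 - G₁)⁻¹ i i = 1 := by
    intro i
    have h := diag_mul_of_blockTriangular hb hU₁ hU₁inv i
    rw [Matrix.mul_nonsing_inv _ hu₁] at h
    simpa [Matrix.one_apply, hU₁diag i] using h.symm
  set V : Matrix (Fin L) (Fin L) ℝ := (1 - G₂) * (1 - G₁)⁻¹ with hV_def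
  set W : Matrix (Fin L) (Fin L) ℝ := (1 - G₁) * (1 - G₂)⁻¹ with hW_def
  have hVW : V * W = 1 := by
    rw [hV_def, hW_def, Matrix.mul_assoc, ← Matrix.mul_assoc (1 - G₁)⁻¹,
      Matrix.nonsing_inv_mul _ hu₁, Matrix.one_mul, Matrix.mul_nonsing_inv _ hu₂]
  have hWV : W * V = 1 := by
    rw [hW_def, hV_def, Matrix.mul_assoc, ← Matrix.mul_assoc (1 - G₂)⁻¹,
      Matrix.nonsing_inv_mul _ hu₂, Matrix.one_mul, Matrix.mul_nonsing_inv _ hu₁]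
  have hVT : V.BlockTriangular b := hU₂.mul hU₁inv
  have hWT : W.BlockTriangular b := hU₁.mul hU₂inv
  have hVdiag : ∀ i, V i i = 1 := by
    intro i
    rw [hV_def, diag_mul_of_blockTriangular hb hU₂ hU₁inv, hU₂diag, hU₁invdiag, one_mul]
  -- main identity: V Λ₁ Vᵀ = Λ₂
  have key : V * Λ₁ * Vᵀ = Λ₂ := by
    have h2 : ((1 - G₂)⁻¹)ᵀ * (1 - G₂)ᵀ = 1 := by
      rw [← Matrix.transpose_mul, Matrix.mul_nonsing_inv _ hu₂, Matrix.transpose_one]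
    have h3 : (1 - G₂) * (1 - G₂)⁻¹ = 1 := Matrix.mul_nonsing_inv _ hu₂
    calc V * Λ₁ * Vᵀ
        = (1 - G₂) * ((1 - G₁)⁻¹ * Λ₁ * ((1 - G₁)⁻¹)ᵀ) * (1 - G₂)ᵀ := by
          rw [hV_def, Matrix.transpose_mul]; simp only [Matrix.mul_assoc]
      _ = (1 - G₂) * ((1 - G₂)⁻¹ * Λ₂ * ((1 - G₂)⁻¹)ᵀ) * (1 - G₂)ᵀ := by rw [E]
      _ = ((1 - G₂) * (1 - G₂)⁻¹) * (Λ₂ * (((1 - G₂)⁻¹)ᵀ * (1 - G₂)ᵀ)) := by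
          simp only [Matrix.mul_assoc]
      _ = Λ₂ := by rw [h2, h3, Matrix.one_mul, Matrix.mul_one]
  set M : Matrix (Fin L) (Fin L) ℝ := V * Λ₁ with hM_def
  have hM2 : M = Λ₂ * Wᵀ := by
    have hVtWt : Vᵀ * Wᵀ = 1 := by rw [← Matrix.transpose_mul, hWV, Matrix.transpose_one]
    rw [← key, Matrix.mul_assoc, hVtWt, Matrix.mul_one]
  -- entrywise expressions
  have hΛ₁diag : Λ₁ = Matrix.diagonal Λ₁.diag := hΛ₁.diagonal_diag.symm
  have hΛ₂diag : Λ₂ = Matrix.diagonal Λ₂.diag := hΛ₂.diagonal_diag.symm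
  have hMentry1 : ∀ i j, M i j = V i j * Λ₁ j j := by
    intro i j
    rw [hM_def, hΛ₁diag, Matrix.mul_diagonal]
    simp [Matrix.diag]
  have hMentry2 : ∀ i j, M i j = Λ₂ i i * W j i := by
    intro i j
    rw [hM2, hΛ₂diag, Matrix.diagonal_mul]
    simp [Matrix.diag, Matrix.transpose_apply]
  have hMoff : ∀ i j, i ≠ j → M i j = 0 := by
    intro i j hij
    rcases lt_trichotomy (b i) (b j) with h | h | h
    · rw [hMentry2 i j, hWT h, mul_zero]
    · exact absurd (hb h) hij
    · rw [hMentry1 i j, hVT h, zero_mul]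
  have hΛeq : Λ₁ = Λ₂ := by
    have hWdiag : ∀ i, W i i = 1 := by
      intro i
      have hU₂invdiag : (1 - G₂)⁻¹ i i = 1 := by
        have h := diag_mul_of_blockTriangular hb hU₂ hU₂inv i
        rw [Matrix.mul_nonsing_inv _ hu₂] at h
        simpa [Matrix.one_apply, hU₂diag i] using h.symm
      rw [hW_def, diag_mul_of_blockTriangular hb hU₁ hU₂inv, hU₁diag, hU₂invdiag, one_mul]
    have hdiageq : ∀ i, Λ₁ i i = Λ₂ i i := by
      intro i
      have h1 := hMentry1 i i
      have h2 := hMentry2 i i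
      rw [hVdiag, one_mul] at h1
      rw [hWdiag, mul_one] at h2
      rw [← h1, h2]
    rw [hΛ₁diag, hΛ₂diag]
    exact congrArg Matrix.diagonal (funext fun i => hdiageq i)
  have hVeq1 : V = 1 := by
    ext i j
    by_cases hij : i = j
    · subst hij; rw [hVdiag, Matrix.one_apply_eq]
    · have := hMoff i j hij
      rw [hMentry1 i j] at this
      have hne : Λ₁ j j ≠ 0 := ne_of_gt (hΛ₁p j)
      have : V i j = 0 := by
        rcases mul_eq_zero.mp this with h | h
        · exact h
        · exact absurd h hne
      rw [this, Matrix.one_apply_ne hij]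
  have hGeq : G₁ = G₂ := by
    have h : (1 - G₂) * (1 - G₁)⁻¹ * (1 - G₁) = 1 * (1 - G₁) := by
      rw [← hV_def, hVeq1]
    rw [Matrix.mul_assoc, Matrix.nonsing_inv_mul _ hu₁, Matrix.mul_one, Matrix.one_mul] at h
    have := sub_right_injective h
    exact this.symm
  exact ⟨hGeq, hΛeq⟩
end

section
/- Let 𝕂 be a field and let L, m be positive integers with m ≥ L. For k = 0, 1 let G_k be an L×L matrix over 𝕂 with zero diagonal entries such that I − G_k is invertible, and let U_k be an L×m matrix over 𝕂. Suppose there is an invertible m×m matrix Q over 𝕂 (the same for k = 0 and k = 1) such that U_k Q = [D_k F_k], where D_k is an L×L diagonal invertible matrix and F_k is an L×(m−L) matrix. If (I−G₁)⁻¹ U₁ = (I−G₀)⁻¹ U₀, then G₁ = G₀ and U₁ = U₀ (and hence D₁ = D₀). -/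
open Matrix

/-- Algebraic core of Theorem 1 of the paper: if the input matrices `U₀, U₁` of two network
models can be brought, by one and the same invertible column operation `Q`, to the form
`[D  F]` with `D` a leading `L × L` diagonal invertible block, then equality of the network
transfer matrices `(I-G)⁻¹ U` forces the two models to coincide. -/
theorem global_identifiability_leading_diagonal
    {𝕂 : Type*} [Field 𝕂] (L m : ℕ) (hL : 0 < L) (hLm : L ≤ m)
    (G₀ G₁ : Matrix (Fin L) (Fin L) 𝕂) (U₀ U₁ : Matrix (Fin L) (Fin m) 𝕂)
    (hG₀d : ∀ i : Fin L, G₀ i i = 0) (hG₁d : ∀ i : Fin L, G₁ i i = 0)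
    (hG₀inv : IsUnit (1 - G₀).det) (hG₁inv : IsUnit (1 - G₁).det)
    (Q : Matrix (Fin m) (Fin m) 𝕂) (hQ : IsUnit Q.det)
    -- the leading `L × L` block of `U₀ * Q` is diagonal with nonzero diagonal entries
    (hD₀ : ∀ (i : Fin L) (j : Fin m), (j : ℕ) < L → (i : ℕ) ≠ (j : ℕ) → (U₀ * Q) i j = 0)
    (hD₀inv : ∀ i : Fin L, (U₀ * Q) i ⟨(i : ℕ), lt_of_lt_of_le i.isLt hLm⟩ ≠ 0)
    -- the leading `L × L` block of `U₁ * Q` is diagonal with nonzero diagonal entries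
    (hD₁ : ∀ (i : Fin L) (j : Fin m), (j : ℕ) < L → (i : ℕ) ≠ (j : ℕ) → (U₁ * Q) i j = 0)
    (hD₁inv : ∀ i : Fin L, (U₁ * Q) i ⟨(i : ℕ), lt_of_lt_of_le i.isLt hLm⟩ ≠ 0)
    (h : (1 - G₁)⁻¹ * U₁ = (1 - G₀)⁻¹ * U₀) :
    G₁ = G₀ ∧ U₁ = U₀ := by
  set X : Matrix (Fin L) (Fin L) 𝕂 := (1 - G₁) * (1 - G₀)⁻¹ with hX
  have hU₁ : U₁ = X * U₀ := by
    have := congrArg (fun M => (1 - G₁) * M) h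
    simpa [← Matrix.mul_assoc, Matrix.mul_nonsing_inv_cancel_right, hX,
      Matrix.mul_nonsing_inv (1 - G₁) hG₁inv,
      Matrix.mul_nonsing_inv_cancel_left _ _ hG₁inv] using this
  -- embedding of Fin L into Fin m
  set e : Fin L → Fin m := fun j => ⟨(j : ℕ), lt_of_lt_of_le j.isLt hLm⟩ with he
  -- off-diagonal entries of X vanish
  have hXoff : ∀ i j : Fin L, i ≠ j → X i j = 0 := by
    intro i j hij
    have h1 : (U₁ * Q) i (e j) = ∑ k, X i k * (U₀ * Q) k (e j) := by
      rw [hU₁, Matrix.mul_assoc, Matrix.mul_apply]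
    have h2 : ∀ k : Fin L, k ≠ j → (U₀ * Q) k (e j) = 0 := by
      intro k hk
      exact hD₀ k (e j) j.isLt (by simpa [he, Fin.val_eq_val] using hk)
    have h3 : (U₁ * Q) i (e j) = 0 :=
      hD₁ i (e j) j.isLt (by simpa [he, Fin.val_eq_val] using hij)
    have h4 : ∑ k, X i k * (U₀ * Q) k (e j) = X i j * (U₀ * Q) j (e j) := by
      rw [Finset.sum_eq_single j]
      · intro k _ hk; rw [h2 k hk, mul_zero]
      · intro hk; exact absurd (Finset.mem_univ j) hk
    have : X i j * (U₀ * Q) j (e j) = 0 := by rw [← h4, ← h1, h3]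
    rcases mul_eq_zero.mp this with h' | h'
    · exact h'
    · exact absurd h' (hD₀inv j)
  have hXG : X * (1 - G₀) = 1 - G₁ := by
    rw [hX, Matrix.mul_assoc, Matrix.nonsing_inv_mul (1 - G₀) hG₀inv, Matrix.mul_one]
  -- diagonal entries of X are 1
  have hXdiag : ∀ i : Fin L, X i i = 1 := by
    intro i
    have h1 : (X * (1 - G₀)) i i = X i i * (1 - G₀) i i := by
      rw [Matrix.mul_apply, Finset.sum_eq_single i]
      · intro k _ hk; rw [hXoff i k (Ne.symm hk), zero_mul]
      · intro hk; exact absurd (Finset.mem_univ i) hk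
    have h2 : (1 - G₀) i i = 1 := by
      simp [Matrix.sub_apply, Matrix.one_apply, hG₀d i]
    have h3 : (1 - G₁) i i = 1 := by
      simp [Matrix.sub_apply, Matrix.one_apply, hG₁d i]
    have := congrArg (fun M => M i i) hXG
    simp only [h1, h2, h3, mul_one] at this
    exact this
  have hXone : X = 1 := by
    ext i j
    by_cases hij : i = j
    · subst hij; simp [hXdiag i, Matrix.one_apply]
    · simp [hXoff i j hij, Matrix.one_apply, hij]
  constructor
  · have := hXG
    rw [hXone, Matrix.one_mul] at this
    have := sub_right_injective this
    exact this.symm ▸ rfl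
  · rw [hU₁, hXone, Matrix.one_mul]
end

section
/- Let 𝕂 be a field and let L, m be positive integers with m ≥ L. For k = 0, 1 let G_k be an L×L matrix over 𝕂 with zero diagonal entries such that I − G_k is invertible, and let U_k be an L×m matrix over 𝕂. Suppose there is an injective map c : {1,…,L} → {1,…,m} such that for k = 0, 1 and every i ∈ {1,…,L}: (U_k)_{i, c(i)} ≠ 0 and (U_k)_{j, c(i)} = 0 for all j ≠ i. If (I−G₁)⁻¹ U₁ = (I−G₀)⁻¹ U₀, then G₁ = G₀ and U₁ = U₀. -/
open Matrix

/-- Algebraic core of Corollary 1 of the paper: if every node `i` has its own input channel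
`c i` (column `c i` of `U_k` has its only nonzero entry in row `i`, for both models), then
equality of the network transfer matrices `(I-G)⁻¹ U` forces the two models to coincide. -/
theorem global_identifiability_own_excitation
    {𝕂 : Type*} [Field 𝕂] (L m : ℕ) (hL : 0 < L) (hLm : L ≤ m)
    (G₀ G₁ : Matrix (Fin L) (Fin L) 𝕂) (U₀ U₁ : Matrix (Fin L) (Fin m) 𝕂)
    (hG₀d : ∀ i : Fin L, G₀ i i = 0) (hG₁d : ∀ i : Fin L, G₁ i i = 0)
    (hG₀inv : IsUnit (1 - G₀).det) (hG₁inv : IsUnit (1 - G₁).det)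
    (c : Fin L → Fin m) (hc : Function.Injective c)
    (hc₀ : ∀ i : Fin L, U₀ i (c i) ≠ 0 ∧ ∀ j : Fin L, j ≠ i → U₀ j (c i) = 0)
    (hc₁ : ∀ i : Fin L, U₁ i (c i) ≠ 0 ∧ ∀ j : Fin L, j ≠ i → U₁ j (c i) = 0)
    (h : (1 - G₁)⁻¹ * U₁ = (1 - G₀)⁻¹ * U₀) :
    G₁ = G₀ ∧ U₁ = U₀ := by
  set M : Matrix (Fin L) (Fin L) 𝕂 := (1 - G₁) * (1 - G₀)⁻¹ with hM
  have hU : U₁ = M * U₀ := by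
    calc U₁ = (1 - G₁) * ((1 - G₁)⁻¹ * U₁) := by
              rw [← Matrix.mul_assoc, Matrix.mul_nonsing_inv _ hG₁inv, Matrix.one_mul]
      _ = M * U₀ := by rw [h, hM, Matrix.mul_assoc]
  have hMG : M * (1 - G₀) = 1 - G₁ := by
    rw [hM, Matrix.mul_assoc, Matrix.nonsing_inv_mul _ hG₀inv, Matrix.mul_one]
  have hMoff : ∀ i j : Fin L, j ≠ i → M j i = 0 := by
    intro i j hji
    have h1 : U₁ j (c i) = M j i * U₀ i (c i) := by
      rw [hU]
      show ∑ k, M j k * U₀ k (c i) = _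
      refine Finset.sum_eq_single i (fun k _ hk => ?_) (by simp)
      rw [(hc₀ i).2 k hk, mul_zero]
    have h2 := (hc₁ i).2 j hji
    rw [h2] at h1
    rcases mul_eq_zero.mp h1.symm with h3 | h3
    · exact h3
    · exact absurd h3 (hc₀ i).1
  have hMdiag : ∀ i : Fin L, M i i = 1 := by
    intro i
    have := congrFun (congrFun hMG i) i
    simp only [Matrix.mul_apply, Matrix.sub_apply, Matrix.one_apply_eq, hG₀d, hG₁d,
      sub_zero] at this
    rw [Finset.sum_eq_single i (fun k _ hk => by
      rw [hMoff k i hk.symm, zero_mul]) (by simp)] at this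
    simpa [Matrix.sub_apply, Matrix.one_apply_eq, hG₀d] using this
  have hM1 : M = 1 := by
    ext j i
    by_cases hji : j = i
    · subst hji; simp [hMdiag j]
    · rw [hMoff i j hji, Matrix.one_apply_ne hji]
  rw [hM1, Matrix.one_mul] at hMG hU
  exact ⟨by have := sub_right_injective hMG; exact this.symm, hU⟩
end

section
/- Let 𝕂 be a field, L, m positive integers. For each i ∈ {1,…,L} let α_i ⊆ {1,…,L}\{i} and β_i ⊆ {1,…,m}. For k = 0, 1 let G_k be an L×L matrix over 𝕂 with zero diagonal entries such that I − G_k is invertible, and let U_k be an L×m matrix over 𝕂, and suppose that (G₁)_{ij} = (G₀)_{ij} for every i and every j ∉ α_i, and (U₁)_{ik} = (U₀)_{ik} for every i and every k ∉ β_i. Let T := (I−G₀)⁻¹ U₀. Assume that for every i ∈ {1,…,L}, the family of row vectors obtained by restricting the rows of T indexed by α_i to the columns outside β_i is linearly independent over 𝕂. If (I−G₁)⁻¹ U₁ = T, then G₁ = G₀ and U₁ = U₀. -/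
open Matrix

/-- Sufficiency part of Theorem 2 of the paper: with parametrized entry patterns `α i`
(row `i` of `G`, off-diagonal) and `β i` (row `i` of `U`), if for every `i` the rows of
`T := (I-G₀)⁻¹ U₀` indexed by `α i`, restricted to the columns outside `β i`, are linearly
independent, then equality of the network transfer matrices forces model equality. -/
theorem global_identifiability_sufficiency
    {𝕂 : Type*} [Field 𝕂] (L m : ℕ) (hL : 0 < L) (hm : 0 < m)
    (α : Fin L → Finset (Fin L)) (hα : ∀ i : Fin L, i ∉ α i)
    (β : Fin L → Finset (Fin m))
    (G₀ G₁ : Matrix (Fin L) (Fin L) 𝕂) (U₀ U₁ : Matrix (Fin L) (Fin m) 𝕂)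
    (hG₀d : ∀ i : Fin L, G₀ i i = 0) (hG₁d : ∀ i : Fin L, G₁ i i = 0)
    (hG₀inv : IsUnit (1 - G₀).det) (hG₁inv : IsUnit (1 - G₁).det)
    (hGfix : ∀ i j : Fin L, j ∉ α i → G₁ i j = G₀ i j)
    (hUfix : ∀ (i : Fin L) (k : Fin m), k ∉ β i → U₁ i k = U₀ i k)
    (hrank : ∀ i : Fin L,
      LinearIndependent 𝕂
        (fun j : (α i : Finset (Fin L)) => fun k : ((β i)ᶜ : Finset (Fin m)) =>
          ((1 - G₀)⁻¹ * U₀) (j : Fin L) (k : Fin m)))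
    (h : (1 - G₁)⁻¹ * U₁ = (1 - G₀)⁻¹ * U₀) :
    G₁ = G₀ ∧ U₁ = U₀ := by
  set T : Matrix (Fin L) (Fin m) 𝕂 := (1 - G₀)⁻¹ * U₀ with hT
  have hU₁ : U₁ = (1 - G₁) * T := by
    rw [← h, ← Matrix.mul_assoc, Matrix.mul_nonsing_inv _ hG₁inv, Matrix.one_mul]
  have hU₀ : U₀ = (1 - G₀) * T := by
    rw [hT, ← Matrix.mul_assoc, Matrix.mul_nonsing_inv _ hG₀inv, Matrix.one_mul]
  have hDT : (G₀ - G₁) * T = U₁ - U₀ := by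
    have e : (G₀ - G₁ : Matrix (Fin L) (Fin L) 𝕂) = (1 - G₁) - (1 - G₀) := by abel
    rw [e, Matrix.sub_mul, ← hU₁, ← hU₀]
  have hD : ∀ i j : Fin L, (G₀ - G₁) i j = 0 := by
    intro i j
    by_cases hj : j ∈ α i
    · have li := Fintype.linearIndependent_iff.mp (hrank i)
      have key : ∑ j' : (α i : Finset (Fin L)),
          (fun j' : (α i : Finset (Fin L)) => (G₀ - G₁) i j') j' •
            (fun k : ((β i)ᶜ : Finset (Fin m)) => T (j' : Fin L) (k : Fin m)) = 0 := by
        funext k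
        have hk : (k : Fin m) ∉ β i := Finset.mem_compl.mp k.2
        have hzero : ((G₀ - G₁) * T) i k = 0 := by
          rw [hDT]
          simp [Matrix.sub_apply, hUfix i k hk]
        have hsum : ∑ j' : Fin L, (G₀ - G₁) i j' * T j' (k : Fin m) = 0 := by
          simpa [Matrix.mul_apply] using hzero
        have hrestrict : ∑ j' ∈ α i, (G₀ - G₁) i j' * T j' (k : Fin m)
            = ∑ j' : Fin L, (G₀ - G₁) i j' * T j' (k : Fin m) := by
          refine Finset.sum_subset (Finset.subset_univ _) ?_
          intro x _ hx
          have : (G₀ - G₁) i x = 0 := by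
            simp [Matrix.sub_apply, hGfix i x hx]
          simp [this]
        have := hrestrict.trans hsum
        simp only [Finset.sum_apply, Pi.smul_apply, Pi.zero_apply, smul_eq_mul]
        rw [Finset.sum_coe_sort (α i) (fun j' => (G₀ - G₁) i j' * T j' (k : Fin m))]
        simpa using this
      have := li (fun j' : (α i : Finset (Fin L)) => (G₀ - G₁) i j') key ⟨j, hj⟩
      simpa using this
    · simp [Matrix.sub_apply, hGfix i j hj]
  have hG : G₁ = G₀ := by
    ext i j
    have := hD i j
    simp only [Matrix.sub_apply, sub_eq_zero] at this
    exact this.symm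
  exact ⟨hG, by rw [hU₁, hU₀, hG]⟩
end

section
/- Let 𝕂 be a field, L, m positive integers, and fix a row index i ∈ {1,…,L}, a set α_i ⊆ {1,…,L}\{i} and a set β_i ⊆ {1,…,m}. For k = 0, 1 let G_k be an L×L matrix over 𝕂 with zero diagonal entries such that I − G_k is invertible, and let U_k be an L×m matrix over 𝕂, and suppose that (G₁)_{ij} = (G₀)_{ij} for every j ∉ α_i and (U₁)_{ik} = (U₀)_{ik} for every k ∉ β_i (only row i is constrained). Let T := (I−G₀)⁻¹ U₀ and assume the family of row vectors obtained by restricting the rows of T indexed by α_i to the columns outside β_i is linearly independent over 𝕂. If (I−G₁)⁻¹ U₁ = T, then row i of G₁ equals row i of G₀ and row i of U₁ equals row i of U₀. -/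
open Matrix

/-- Row-wise version of the identifiability conditions of Theorem 2 (Remark 7 of the paper):
if the rank condition holds for the single row `i`, and the two models agree on the
non-parametrized entries of row `i`, then equality of the network transfer matrices forces
equality of row `i` of `G` and of row `i` of `U`. -/
theorem rowwise_identifiability
    {𝕂 : Type*} [Field 𝕂] (L m : ℕ) (hL : 0 < L) (hm : 0 < m)
    (i : Fin L) (αi : Finset (Fin L)) (hαi : i ∉ αi) (βi : Finset (Fin m))
    (G₀ G₁ : Matrix (Fin L) (Fin L) 𝕂) (U₀ U₁ : Matrix (Fin L) (Fin m) 𝕂)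
    (hG₀d : ∀ i : Fin L, G₀ i i = 0) (hG₁d : ∀ i : Fin L, G₁ i i = 0)
    (hG₀inv : IsUnit (1 - G₀).det) (hG₁inv : IsUnit (1 - G₁).det)
    (hGfix : ∀ j : Fin L, j ∉ αi → G₁ i j = G₀ i j)
    (hUfix : ∀ k : Fin m, k ∉ βi → U₁ i k = U₀ i k)
    (hrank : LinearIndependent 𝕂
      (fun j : (αi : Finset (Fin L)) => fun k : (βiᶜ : Finset (Fin m)) =>
        ((1 - G₀)⁻¹ * U₀) (j : Fin L) (k : Fin m)))
    (h : (1 - G₁)⁻¹ * U₁ = (1 - G₀)⁻¹ * U₀) :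
    (∀ j : Fin L, G₁ i j = G₀ i j) ∧ (∀ k : Fin m, U₁ i k = U₀ i k) := by
  set T := (1 - G₀)⁻¹ * U₀ with hT
  have hU₁ : U₁ = (1 - G₁) * T := by
    rw [← h, Matrix.mul_nonsing_inv_cancel_left _ _ hG₁inv]
  have hU₀ : U₀ = (1 - G₀) * T := by
    rw [hT, Matrix.mul_nonsing_inv_cancel_left _ _ hG₀inv]
  have key : ∀ k, U₁ i k - U₀ i k = ∑ j, (G₀ i j - G₁ i j) * T j k := by
    intro k
    conv_lhs => rw [hU₁, hU₀]
    rw [Matrix.mul_apply, Matrix.mul_apply, ← Finset.sum_sub_distrib]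
    refine Finset.sum_congr rfl fun j _ => ?_
    rw [← sub_mul]
    congr 1
    simp only [Matrix.sub_apply]
    ring
  have hzero : ∀ k, k ∉ βi → ∑ j ∈ αi, (G₀ i j - G₁ i j) * T j k = 0 := by
    intro k hk
    have h0 : (0 : 𝕂) = ∑ j, (G₀ i j - G₁ i j) * T j k := by
      rw [← key k, hUfix k hk, sub_self]
    rw [Finset.sum_subset (Finset.subset_univ αi)
      (fun j _ hj => by rw [hGfix j hj, sub_self, zero_mul])]
    exact h0.symm
  have hα : ∀ j ∈ αi, G₀ i j - G₁ i j = 0 := by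
    have hli := Fintype.linearIndependent_iff.mp hrank
      (fun j : (αi : Finset (Fin L)) => G₀ i (j : Fin L) - G₁ i (j : Fin L)) ?_
    · intro j hj
      exact hli ⟨j, hj⟩
    · funext k
      have := hzero (k : Fin m) (Finset.mem_compl.mp k.2)
      rw [← Finset.sum_attach αi (fun j => (G₀ i j - G₁ i j) * T j (k : Fin m))] at this
      simpa [Finset.sum_apply] using this
  have hGrow : ∀ j : Fin L, G₁ i j = G₀ i j := by
    intro j
    by_cases hj : j ∈ αi
    · exact (sub_eq_zero.mp (hα j hj)).symm
    · exact hGfix j hj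
  refine ⟨hGrow, fun k => ?_⟩
  have : U₁ i k - U₀ i k = 0 := by
    rw [key k]
    exact Finset.sum_eq_zero fun j _ => by rw [hGrow j, sub_self, zero_mul]
  exact sub_eq_zero.mp this
end

section
/- Let 𝕂 be an infinite field, L, m positive integers. Let G₀ be an L×L matrix over 𝕂 with zero diagonal entries such that I − G₀ is invertible, let U₀ be an L×m matrix over 𝕂, and set T := (I−G₀)⁻¹ U₀. Fix a row index i ∈ {1,…,L}, a set α_i ⊆ {1,…,L}\{i} and a set β_i ⊆ {1,…,m}. If the family of row vectors obtained by restricting the rows of T indexed by α_i to the columns outside β_i is linearly dependent over 𝕂 (in particular this holds whenever |α_i| > m − |β_i|), then there exist an L×L matrix G₁ over 𝕂 with zero diagonal entries and I − G₁ invertible and an L×m matrix U₁ over 𝕂 such that: (G₁)_{kj} = (G₀)_{kj} for every entry except possibly (i,j) with j ∈ α_i; (U₁)_{kj} = (U₀)_{kj} for every entry except possibly (i,k) with k ∈ β_i; (G₁, U₁) ≠ (G₀, U₀); and (I−G₁)⁻¹ U₁ = T. -/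
open Matrix

/-- Necessity part of Theorem 2 of the paper: over an infinite field, if for some row `i`
the rows of `T := (I-G₀)⁻¹ U₀` indexed by `α i`, restricted to the columns outside `β i`,
are linearly dependent, then there is a second, distinct network model matching the same
parametrization pattern (differing from `(G₀, U₀)` only in row `i`, at positions `αi` of `G`
and `βi` of `U`) with the same network transfer matrix `T`. -/
theorem non_identifiability_of_rank_deficiency
    {𝕂 : Type*} [Field 𝕂] [Infinite 𝕂] (L m : ℕ) (hL : 0 < L) (hm : 0 < m)
    (G₀ : Matrix (Fin L) (Fin L) 𝕂) (U₀ : Matrix (Fin L) (Fin m) 𝕂)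
    (hG₀d : ∀ i : Fin L, G₀ i i = 0)
    (hG₀inv : IsUnit (1 - G₀).det)
    (i : Fin L) (αi : Finset (Fin L)) (hαi : i ∉ αi) (βi : Finset (Fin m))
    (hdep : ¬ LinearIndependent 𝕂
      (fun j : (αi : Finset (Fin L)) => fun k : (βiᶜ : Finset (Fin m)) =>
        ((1 - G₀)⁻¹ * U₀) (j : Fin L) (k : Fin m))) :
    ∃ (G₁ : Matrix (Fin L) (Fin L) 𝕂) (U₁ : Matrix (Fin L) (Fin m) 𝕂),
      (∀ i : Fin L, G₁ i i = 0) ∧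
      IsUnit (1 - G₁).det ∧
      (∀ (k : Fin L) (j : Fin L), k ≠ i ∨ j ∉ αi → G₁ k j = G₀ k j) ∧
      (∀ (k : Fin L) (j : Fin m), k ≠ i ∨ j ∉ βi → U₁ k j = U₀ k j) ∧
      (G₁, U₁) ≠ (G₀, U₀) ∧
      (1 - G₁)⁻¹ * U₁ = (1 - G₀)⁻¹ * U₀ := by
  classical
  set T : Matrix (Fin L) (Fin m) 𝕂 := (1 - G₀)⁻¹ * U₀ with hT
  obtain ⟨g, hsum0, j₀, hgj₀⟩ := Fintype.not_linearIndependent_iff.mp hdep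
  -- the coefficient vector, extended by zero outside `αi`
  set lam : Fin L → 𝕂 := fun j => if h : j ∈ αi then g ⟨j, h⟩ else 0 with hlam
  have hlami : lam i = 0 := dif_neg hαi
  have hlam_out : ∀ j : Fin L, j ∉ αi → lam j = 0 := fun j hj => dif_neg hj
  -- key vanishing of the combination on columns outside βi
  have key : ∀ j : Fin m, j ∉ βi → ∑ l : Fin L, lam l * T l j = 0 := by
    intro j hj
    have h0 := congrFun hsum0 ⟨j, Finset.mem_compl.mpr hj⟩
    simp only [Finset.sum_apply, Pi.smul_apply, smul_eq_mul, Pi.zero_apply] at h0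
    calc ∑ l : Fin L, lam l * T l j
        = ∑ l ∈ αi, lam l * T l j := by
          refine (Finset.sum_subset (Finset.subset_univ αi) ?_).symm
          intro x _ hx
          rw [hlam_out x hx, zero_mul]
      _ = ∑ l : (αi : Finset (Fin L)), lam (l : Fin L) * T (l : Fin L) j :=
          (Finset.sum_coe_sort αi (fun l => lam l * T l j)).symm
      _ = ∑ l : (αi : Finset (Fin L)), g l * T (l : Fin L) j := by
          refine Finset.sum_congr rfl fun l _ => ?_
          have : lam (l : Fin L) = g l := by simp [hlam, l.2]
          rw [this]
      _ = 0 := h0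
  -- pick a good ε
  set c : 𝕂 :=
    (replicateRow Unit lam * (1 - G₀)⁻¹ * replicateCol Unit (Pi.single i (1 : 𝕂))) () () with hc
  obtain ⟨ε, hε⟩ := Infinite.exists_notMem_finset ({0, c⁻¹} : Finset 𝕂)
  simp only [Finset.mem_insert, Finset.mem_singleton, not_or] at hε
  obtain ⟨hε0, hεc⟩ := hε
  have hεc' : 1 + -ε * c ≠ 0 := by
    intro h
    have hce : ε * c = 1 := by linear_combination -h
    have hc0 : c ≠ 0 := by
      intro h; rw [h, mul_zero] at hce; exact one_ne_zero hce.symm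
    exact hεc (by field_simp; linear_combination hce)
  set u : Fin L → 𝕂 := Pi.single i (-ε) with hu
  set Δ : Matrix (Fin L) (Fin L) 𝕂 := replicateCol Unit u * replicateRow Unit lam with hΔ
  have hΔapply : ∀ k j, Δ k j = u k * lam j := by
    intro k j; simp [hΔ, Matrix.mul_apply]
  have hui : ∀ k : Fin L, k ≠ i → u k = 0 := fun k hk => Pi.single_eq_of_ne hk _
  set G₁ : Matrix (Fin L) (Fin L) 𝕂 := G₀ - Δ with hG₁
  have h1G₁ : 1 - G₁ = (1 - G₀) + Δ := by rw [hG₁]; abel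
  have hdet : IsUnit (1 - G₁).det := by
    rw [h1G₁, hΔ, det_add_replicateCol_mul_replicateRow hG₀inv]
    have hu1 : u = (-ε) • (Pi.single i (1 : 𝕂) : Fin L → 𝕂) := by
      rw [hu]; ext k
      by_cases hk : k = i
      · subst hk; simp
      · simp [Pi.single_eq_of_ne hk]
    rw [hu1, Matrix.replicateCol_smul, Matrix.mul_smul]
    have hdet1 :
        (1 + -ε • (replicateRow Unit lam * (1 - G₀)⁻¹ * replicateCol Unit (Pi.single i (1:𝕂)))).det
          = 1 + -ε * c := by
      rw [det_unique, Matrix.add_apply, Matrix.smul_apply, Matrix.one_apply_eq,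
        smul_eq_mul, hc]
    rw [hdet1]
    exact hG₀inv.mul (isUnit_iff_ne_zero.mpr hεc')
  set U₁ : Matrix (Fin L) (Fin m) 𝕂 := (1 - G₁) * T with hU₁
  have hU₁' : U₁ = U₀ + Δ * T := by
    rw [hU₁, h1G₁, Matrix.add_mul, hT, Matrix.mul_nonsing_inv_cancel_left _ _ hG₀inv]
  have hΔT : ∀ (k : Fin L) (j : Fin m), (Δ * T) k j = u k * ∑ l : Fin L, lam l * T l j := by
    intro k j
    rw [Matrix.mul_apply, Finset.mul_sum]
    exact Finset.sum_congr rfl fun l _ => by rw [hΔapply]; ring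
  refine ⟨G₁, U₁, ?_, hdet, ?_, ?_, ?_, ?_⟩
  · intro k
    rw [hG₁, Matrix.sub_apply, hΔapply]
    by_cases hk : k = i
    · subst hk; rw [hG₀d, hlami, mul_zero, sub_zero]
    · rw [hG₀d, hui k hk, zero_mul, sub_zero]
  · intro k j hkj
    rw [hG₁, Matrix.sub_apply, hΔapply]
    rcases hkj with hk | hj
    · rw [hui k hk, zero_mul, sub_zero]
    · rw [hlam_out j hj, mul_zero, sub_zero]
  · intro k j hkj
    rw [hU₁', Matrix.add_apply, hΔT]
    rcases hkj with hk | hj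
    · rw [hui k hk, zero_mul, add_zero]
    · rw [key j hj, mul_zero, add_zero]
  · intro h
    have hGeq : G₁ = G₀ := congrArg Prod.fst h
    have h2 := congrFun (congrFun hGeq i) (j₀ : Fin L)
    rw [hG₁, Matrix.sub_apply, hΔapply] at h2
    have h3 : u i * lam (j₀ : Fin L) = 0 := sub_eq_self.mp h2
    have hlamj₀ : lam (j₀ : Fin L) = g j₀ := by simp [hlam, j₀.2]
    have hui' : u i = -ε := by simp [hu]
    rw [hui', hlamj₀] at h3
    rcases mul_eq_zero.mp h3 with h4 | h4
    · exact hε0 (neg_eq_zero.mp h4)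
    · exact hgj₀ h4
  · rw [hU₁, Matrix.nonsing_inv_mul_cancel_left _ _ hdet]
end

section
/- Let 𝕂 be an infinite field, L, m positive integers, and for each i ∈ {1,…,L} fix sets α_i ⊆ {1,…,L}\{i} and β_i ⊆ {1,…,m}. Let G₀ be an L×L matrix over 𝕂 with zero diagonal entries such that I − G₀ is invertible, let U₀ be an L×m matrix over 𝕂, and set T := (I−G₀)⁻¹ U₀. Then the following are equivalent: (i) every pair (G₁, U₁) with G₁ an L×L matrix over 𝕂 with zero diagonal and I − G₁ invertible, U₁ an L×m matrix over 𝕂, satisfying (G₁)_{ij} = (G₀)_{ij} for all i and j ∉ α_i, (U₁)_{ik} = (U₀)_{ik} for all i and k ∉ β_i, and (I−G₁)⁻¹ U₁ = T, equals (G₀, U₀); (ii) for every i ∈ {1,…,L}, the family of row vectors obtained by restricting the rows of T indexed by α_i to the columns outside β_i is linearly independent over 𝕂 (which in particular forces |α_i| + |β_i| ≤ m for every i). -/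
open Matrix

/-- Theorem 2, part 1 of the paper: over an infinite field, a network model set with
parametrized entry patterns `α i` (row `i` of `G`, off-diagonal) and `β i` (row `i` of `U`)
is globally network identifiable at the model `(G₀, U₀)` if and only if, for every `i`,
the rows of `T := (I-G₀)⁻¹ U₀` indexed by `α i`, restricted to the columns outside `β i`,
are linearly independent. -/
theorem global_identifiability_iff_rank_condition
    {𝕂 : Type*} [Field 𝕂] [Infinite 𝕂] (L m : ℕ) (hL : 0 < L) (hm : 0 < m)
    (α : Fin L → Finset (Fin L)) (hα : ∀ i : Fin L, i ∉ α i)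
    (β : Fin L → Finset (Fin m))
    (G₀ : Matrix (Fin L) (Fin L) 𝕂) (U₀ : Matrix (Fin L) (Fin m) 𝕂)
    (hG₀d : ∀ i : Fin L, G₀ i i = 0)
    (hG₀inv : IsUnit (1 - G₀).det) :
    (∀ (G₁ : Matrix (Fin L) (Fin L) 𝕂) (U₁ : Matrix (Fin L) (Fin m) 𝕂),
        (∀ i : Fin L, G₁ i i = 0) →
        IsUnit (1 - G₁).det →
        (∀ i j : Fin L, j ∉ α i → G₁ i j = G₀ i j) →
        (∀ (i : Fin L) (k : Fin m), k ∉ β i → U₁ i k = U₀ i k) →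
        (1 - G₁)⁻¹ * U₁ = (1 - G₀)⁻¹ * U₀ →
        G₁ = G₀ ∧ U₁ = U₀)
    ↔
    (∀ i : Fin L,
      LinearIndependent 𝕂
        (fun j : (α i : Finset (Fin L)) => fun k : ((β i)ᶜ : Finset (Fin m)) =>
          ((1 - G₀)⁻¹ * U₀) (j : Fin L) (k : Fin m))) := by
  set T : Matrix (Fin L) (Fin m) 𝕂 := (1 - G₀)⁻¹ * U₀ with hTdef
  have hT0 : (1 - G₀) * T = U₀ := Matrix.mul_nonsing_inv_cancel_left _ _ hG₀inv
  constructor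
  · -- identifiability → linear independence
    intro hid i
    rw [Fintype.linearIndependent_iff]
    by_contra hcon
    push_neg at hcon
    obtain ⟨g, hg0, j₀, hgj₀⟩ := hcon
    -- the perturbation matrix
    set C : Matrix (Fin L) (Fin L) 𝕂 :=
      Matrix.of (fun r c => if r = i then (if hc : c ∈ α i then g ⟨c, hc⟩ else 0) else 0)
      with hCdef
    have hCoff : ∀ r c : Fin L, r ≠ i → C r c = 0 := by
      intro r c hr; simp [hCdef, hr]
    have hCα : ∀ c : Fin L, c ∉ α i → C i c = 0 := by
      intro c hc; simp [hCdef, hc]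
    -- row i of C * T vanishes off β i
    have hg0' : ∀ k : ((β i)ᶜ : Finset (Fin m)), ∑ j : (α i : Finset (Fin L)),
        g j * T (j : Fin L) (k : Fin m) = 0 := by
      intro k
      have := congrFun hg0 k
      simpa [Finset.sum_apply] using this
    have hCT : ∀ k : Fin m, k ∉ β i → (C * T) i k = 0 := by
      intro k hk
      have hk' : k ∈ (β i)ᶜ := Finset.mem_compl.2 hk
      have h1 : (C * T) i k = ∑ c ∈ α i, C i c * T c k := by
        rw [Matrix.mul_apply]
        refine (Finset.sum_subset (Finset.subset_univ _) ?_).symm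
        intro c _ hc
        rw [hCα c hc, zero_mul]
      have h2 : ∑ c ∈ α i, C i c * T c k
          = ∑ j : (α i : Finset (Fin L)), g j * T (j : Fin L) k := by
        rw [← Finset.sum_coe_sort (α i) (fun c => C i c * T c k)]
        refine Finset.sum_congr rfl ?_
        intro j _
        simp [hCdef, j.2]
      rw [h1, h2]
      exact hg0' ⟨k, hk'⟩
    -- a scalar t ≠ 0 keeping 1 - G₀ - t • C invertible
    set p : Polynomial 𝕂 :=
      ((1 - G₀).map Polynomial.C - (Polynomial.X : Polynomial 𝕂) • C.map Polynomial.C).det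
      with hpdef
    have hpe : ∀ t : 𝕂, p.eval t = (1 - G₀ - t • C).det := by
      intro t
      have h := RingHom.map_det (Polynomial.evalRingHom t)
        ((1 - G₀).map Polynomial.C - (Polynomial.X : Polynomial 𝕂) • C.map Polynomial.C)
      have hmap : ((1 - G₀).map Polynomial.C
            - (Polynomial.X : Polynomial 𝕂) • C.map Polynomial.C).map
            (Polynomial.evalRingHom t) = 1 - G₀ - t • C := by
        ext r c
        simp only [Matrix.map_apply, Matrix.sub_apply, Matrix.smul_apply, smul_eq_mul,
          Polynomial.coe_evalRingHom, Polynomial.eval_sub, Polynomial.eval_mul,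
          Polynomial.eval_X, Polynomial.eval_C]
      rw [RingHom.mapMatrix_apply, hmap] at h
      rw [hpdef]
      simpa [Polynomial.coe_evalRingHom] using h
    have hp0 : p ≠ 0 := by
      intro h
      have := hpe 0
      rw [h] at this
      simp at this
      exact hG₀inv.ne_zero this.symm
    obtain ⟨t, ht⟩ : ∃ t : 𝕂, (Polynomial.X * p).eval t ≠ 0 := by
      by_contra h
      push_neg at h
      exact mul_ne_zero Polynomial.X_ne_zero hp0 (Polynomial.zero_of_eval_zero _ h)
    rw [Polynomial.eval_mul, Polynomial.eval_X] at ht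
    have ht0 : t ≠ 0 := fun h => ht (by rw [h, zero_mul])
    have htd : p.eval t ≠ 0 := fun h => ht (by rw [h, mul_zero])
    -- the alternative model
    set G₁ : Matrix (Fin L) (Fin L) 𝕂 := G₀ + t • C with hG₁def
    set U₁ : Matrix (Fin L) (Fin m) 𝕂 := U₀ - t • (C * T) with hU₁def
    have hsub : (1 : Matrix (Fin L) (Fin L) 𝕂) - G₁ = 1 - G₀ - t • C := by
      rw [hG₁def, sub_add_eq_sub_sub]
    have hdet1 : IsUnit (1 - G₁).det := by
      rw [hsub, isUnit_iff_ne_zero, ← hpe]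
      exact htd
    have hprod : (1 - G₁) * T = U₁ := by
      rw [hsub, Matrix.sub_mul, hT0, Matrix.smul_mul, hU₁def]
    have heq : (1 - G₁)⁻¹ * U₁ = T := by
      rw [← hprod, Matrix.nonsing_inv_mul_cancel_left _ _ hdet1]
    have hd1 : ∀ r : Fin L, G₁ r r = 0 := by
      intro r
      by_cases hr : r = i
      · subst hr
        have : C r r = 0 := hCα r (hα r)
        simp [hG₁def, Matrix.add_apply, Matrix.smul_apply, this, hG₀d]
      · have : C r r = 0 := hCoff r r hr
        simp [hG₁def, Matrix.add_apply, Matrix.smul_apply, this, hG₀d]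
    have hag : ∀ r j : Fin L, j ∉ α r → G₁ r j = G₀ r j := by
      intro r j hj
      by_cases hr : r = i
      · subst hr
        have : C r j = 0 := hCα j hj
        simp [hG₁def, Matrix.add_apply, Matrix.smul_apply, this]
      · have : C r j = 0 := hCoff r j hr
        simp [hG₁def, Matrix.add_apply, Matrix.smul_apply, this]
    have hbg : ∀ (r : Fin L) (k : Fin m), k ∉ β r → U₁ r k = U₀ r k := by
      intro r k hk
      by_cases hr : r = i
      · subst hr
        have : (C * T) r k = 0 := hCT k hk
        simp [hU₁def, Matrix.sub_apply, Matrix.smul_apply, this]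
      · have : (C * T) r k = 0 := by
          rw [Matrix.mul_apply]
          refine Finset.sum_eq_zero ?_
          intro c _
          rw [hCoff r c hr, zero_mul]
        simp [hU₁def, Matrix.sub_apply, Matrix.smul_apply, this]
    obtain ⟨hG, _⟩ := hid G₁ U₁ hd1 hdet1 hag hbg heq
    -- contradiction at entry (i, j₀)
    have hCij : C i (j₀ : Fin L) = g j₀ := by
      simp [hCdef, j₀.2]
    have : G₁ i (j₀ : Fin L) = G₀ i (j₀ : Fin L) + t * g j₀ := by
      simp [hG₁def, Matrix.add_apply, Matrix.smul_apply, hCij]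
    rw [hG] at this
    exact (mul_ne_zero ht0 hgj₀) (left_eq_add.mp this)
  · -- linear independence → identifiability
    intro hLI G₁ U₁ hd1 hdet1 hag hbg heq
    have hT1 : (1 - G₁) * T = U₁ := by
      rw [← heq, Matrix.mul_nonsing_inv_cancel_left _ _ hdet1]
    have hGrow : ∀ i j : Fin L, G₁ i j = G₀ i j := by
      intro i j
      by_cases hj : j ∈ α i
      · have hLIi := (Fintype.linearIndependent_iff.mp (hLI i))
          (fun j : (α i : Finset (Fin L)) => G₁ i (j : Fin L) - G₀ i (j : Fin L))
        have hsum : ∑ j : (α i : Finset (Fin L)),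
            (G₁ i (j : Fin L) - G₀ i (j : Fin L)) •
              (fun k : ((β i)ᶜ : Finset (Fin m)) => T (j : Fin L) (k : Fin m)) = 0 := by
          funext k
          have hk : (k : Fin m) ∉ β i := Finset.mem_compl.1 k.2
          have h1 : ∑ j : (α i : Finset (Fin L)),
              (G₁ i (j : Fin L) - G₀ i (j : Fin L)) * T (j : Fin L) (k : Fin m)
              = ∑ c ∈ α i, (G₁ i c - G₀ i c) * T c (k : Fin m) :=
            Finset.sum_coe_sort (α i) (fun c => (G₁ i c - G₀ i c) * T c (k : Fin m))
          have h2 : ∑ c ∈ α i, (G₁ i c - G₀ i c) * T c (k : Fin m)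
              = ∑ c : Fin L, (G₁ i c - G₀ i c) * T c (k : Fin m) := by
            refine Finset.sum_subset (Finset.subset_univ _) ?_
            intro c _ hc
            rw [hag i c hc, sub_self, zero_mul]
          have h3 : ∑ c : Fin L, (G₁ i c - G₀ i c) * T c (k : Fin m)
              = ((G₁ - G₀) * T) i (k : Fin m) := by
            rw [Matrix.mul_apply]
            refine Finset.sum_congr rfl ?_
            intro c _
            rw [Matrix.sub_apply]
          have h4 : (G₁ - G₀ : Matrix (Fin L) (Fin L) 𝕂) * T = (1 - G₀) * T - (1 - G₁) * T := by
            rw [← Matrix.sub_mul]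
            congr 1
            abel
          have h5 : ((G₁ - G₀) * T) i (k : Fin m) = 0 := by
            rw [h4, hT0, hT1, Matrix.sub_apply, hbg i k hk, sub_self]
          rw [Finset.sum_apply]
          simp only [Pi.smul_apply, smul_eq_mul]
          rw [h1, h2, h3]
          exact h5
        have := hLIi hsum ⟨j, hj⟩
        exact sub_eq_zero.mp this
      · exact hag i j hj
    have hG : G₁ = G₀ := by ext r c; exact hGrow r c
    refine ⟨hG, ?_⟩
    rw [← hT1, hG, hT0]
end

section
/- Let 𝕂 be a field and let A, B ∈ 𝕂. Let T₂ be the 3×2 matrix over 𝕂 with rows (1, 0), ((A+1)·B, 1), (A+1, 0), and let R be the 3×2 matrix with rows (1, 0), (0, 1), (1, 0). For every X ∈ 𝕂 define G_X as the 3×3 matrix with rows (0, 0, 0), ((A+1)·(B − X), 0, X), (A, 0, 0). Then for every X ∈ 𝕂: G_X has zero diagonal entries, det(I − G_X) = 1 (so I − G_X is invertible), and (I − G_X)⁻¹ R = T₂; moreover the map X ↦ G_X is injective, so if 𝕂 is infinite there are infinitely many distinct module matrices producing the same network transfer matrix T₂. -/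
open Matrix

/-- The one-parameter family of module matrices of Example 1 of the paper at system `S₂`. -/
def exampleG₂ {𝕂 : Type*} [Field 𝕂] (A B X : 𝕂) : Matrix (Fin 3) (Fin 3) 𝕂 :=
  !![0, 0, 0; (A + 1) * (B - X), 0, X; A, 0, 0]

/-- Non-identifiability at system `S₂` of Example 1 of the paper: for every `X`, the hollow
module matrix `G_X = [[0,0,0],[(A+1)(B-X),0,X],[A,0,0]]` satisfies `det (I - G_X) = 1` and
produces the same network transfer matrix `T₂ = (I - G_X)⁻¹ R = [[1,0],[(A+1)B,1],[A+1,0]]`;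
the map `X ↦ G_X` is injective, so over an infinite field there are infinitely many distinct
module matrices producing the transfer matrix `T₂`. -/
theorem example1_S2_not_identifiable {𝕂 : Type*} [Field 𝕂] (A B : 𝕂) :
    (∀ X : 𝕂,
      (∀ i : Fin 3, exampleG₂ A B X i i = 0) ∧
      (1 - exampleG₂ A B X).det = 1 ∧
      (1 - exampleG₂ A B X)⁻¹ * (!![1, 0; 0, 1; 1, 0] : Matrix (Fin 3) (Fin 2) 𝕂) =
        (!![1, 0; (A + 1) * B, 1; A + 1, 0] : Matrix (Fin 3) (Fin 2) 𝕂)) ∧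
    Function.Injective (fun X : 𝕂 => exampleG₂ A B X) ∧
    (Infinite 𝕂 →
      {G : Matrix (Fin 3) (Fin 3) 𝕂 |
        (∀ i : Fin 3, G i i = 0) ∧
        (1 - G)⁻¹ * (!![1, 0; 0, 1; 1, 0] : Matrix (Fin 3) (Fin 2) 𝕂) =
          (!![1, 0; (A + 1) * B, 1; A + 1, 0] : Matrix (Fin 3) (Fin 2) 𝕂)}.Infinite) := by
  have key : ∀ X : 𝕂,
      (∀ i : Fin 3, exampleG₂ A B X i i = 0) ∧
      (1 - exampleG₂ A B X).det = 1 ∧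
      (1 - exampleG₂ A B X)⁻¹ * (!![1, 0; 0, 1; 1, 0] : Matrix (Fin 3) (Fin 2) 𝕂) =
        (!![1, 0; (A + 1) * B, 1; A + 1, 0] : Matrix (Fin 3) (Fin 2) 𝕂) := by
    intro X
    have h1 : (1 : Matrix (Fin 3) (Fin 3) 𝕂) - exampleG₂ A B X =
        !![1, 0, 0; -((A + 1) * (B - X)), 1, -X; -A, 0, 1] := by
      ext i j
      fin_cases i <;> fin_cases j <;>
        simp [exampleG₂, Matrix.one_apply, Matrix.vecHead, Matrix.vecTail]
    have hdet : (1 - exampleG₂ A B X).det = 1 := by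
      rw [h1, Matrix.det_fin_three]
      simp
    have hmul : (1 - exampleG₂ A B X) *
        (!![1, 0; (A + 1) * B, 1; A + 1, 0] : Matrix (Fin 3) (Fin 2) 𝕂) =
        (!![1, 0; 0, 1; 1, 0] : Matrix (Fin 3) (Fin 2) 𝕂) := by
      rw [h1]
      ext i j
      fin_cases i <;> fin_cases j <;>
        simp [Matrix.mul_apply, Fin.sum_univ_three] <;> ring
    refine ⟨fun i => by fin_cases i <;> simp [exampleG₂], hdet, ?_⟩
    rw [← hmul, ← Matrix.mul_assoc,
      Matrix.nonsing_inv_mul _ (by rw [hdet]; exact isUnit_one), Matrix.one_mul]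
  have hinj : Function.Injective (fun X : 𝕂 => exampleG₂ A B X) := by
    intro x y h
    have := congrFun (congrFun h 1) 2
    simpa [exampleG₂] using this
  refine ⟨key, hinj, fun hK => ?_⟩
  exact Set.infinite_of_injective_forall_mem hinj
    (fun X => ⟨(key X).1, (key X).2.2⟩)
end
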